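/- Let d ≥ 2. For every 0 < β < β_c, every pair of sets S, Λ with 0 ∈ S ⊆ Λ ⊆ ℤ^d, and every x ∈ Λ, one has the Simon–Lieb upper bound G_β^Λ(0,x) ≤ G_β^S(0,x) + Σ_{y∈S, z∈Λ∖S, y∼z} G_β^S(0,y)·β·G_β^Λ(z,x). -/

import Mathlib

open scoped ENNReal

namespace WSAW

/-- Vertices of the hypercubic lattice `ℤ^d`. -/
abbrev V (d : ℕ) := Fin d → ℤ

/-- Nearest-neighbour relation on `ℤ^d`. -/
def Adj {d : ℕ} (x y : V d) : Prop := (∑ i, (x i - y i).natAbs) = 1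

/-- A finite nearest-neighbour path in `ℤ^d` with `len` edges. -/
structure SAWPath (d : ℕ) where
  len : ℕ
  f : Fin (len + 1) → V d
  adj : ∀ i : Fin len, Adj (f i.castSucc) (f i.succ)

/-- The weight `ρ(γ) = ∏_{0 ≤ s < t ≤ |γ|} (1 - λ 1[γ(s) = γ(t)])`. -/
noncomputable def weight {d : ℕ} (lam : ℝ) (γ : SAWPath d) : ℝ :=
  ∏ s : Fin (γ.len + 1), ∏ t : Fin (γ.len + 1),
    if s < t ∧ γ.f s = γ.f t then 1 - lam else 1

/-- Paths from `x` to `y` staying inside `Λ`. -/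
def PathsIn {d : ℕ} (Λ : Set (V d)) (x y : V d) : Set (SAWPath d) :=
  {γ | γ.f 0 = x ∧ γ.f (Fin.last γ.len) = y ∧ ∀ i, γ.f i ∈ Λ}

/-- The two-point function `G_β^Λ(x,y)`, valued in `ℝ≥0∞`. -/
noncomputable def G {d : ℕ} (lam β : ℝ) (Λ : Set (V d)) (x y : V d) : ℝ≥0∞ :=
  ∑' γ : PathsIn Λ x y, ENNReal.ofReal (β ^ (γ.1.len) * weight lam γ.1)

/-- The susceptibility `χ(β)`. -/
noncomputable def chi (d : ℕ) (lam β : ℝ) : ℝ≥0∞ :=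
  ∑' x : V d, G lam β Set.univ 0 x

/-- The critical point `β_c`. -/
noncomputable def betaC (d : ℕ) (lam : ℝ) : ℝ :=
  sSup {β : ℝ | 0 ≤ β ∧ chi d lam β < ⊤}

/-- `φ_β(S) = Σ_{y ∈ S, z ∉ S, y ∼ z} β G_β^S(0,y)`. -/
noncomputable def phi (d : ℕ) (lam β : ℝ) (S : Set (V d)) : ℝ≥0∞ :=
  ∑' p : {p : V d × V d // p.1 ∈ S ∧ p.2 ∉ S ∧ Adj p.1 p.2},
    ENNReal.ofReal β * G lam β S 0 p.1.1

/-- The `ℓ^∞` norm of a vertex. -/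
def normInf {d : ℕ} (x : V d) : ℕ := Finset.univ.sup fun i => (x i).natAbs

/-- The box `Λ_n = {x : |x| ≤ n}`. -/
def box (d : ℕ) (n : ℕ) : Set (V d) := {x | normInf x ≤ n}

/-- The length `L_β(ε) = inf {k ≥ 1 : φ_β(Λ_k) ≤ 1 - ε}` (equal to `∞` if no such `k`). -/
noncomputable def Leps (d : ℕ) (lam β ε : ℝ) : ℝ≥0∞ :=
  sInf {L : ℝ≥0∞ | ∃ k : ℕ, L = k ∧ 1 ≤ k ∧ phi d lam β (box d k) ≤ ENNReal.ofReal (1 - ε)}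

/-- The sharp length `L_β = inf {k ≥ 1 : φ_β(Λ_k) ≤ e^{-2}}` (equal to `∞` if no such `k`). -/
noncomputable def Lsharp (d : ℕ) (lam β : ℝ) : ℝ≥0∞ :=
  Leps d lam β (1 - Real.exp (-2))

/-- The first coordinate `x₁` of a vertex. -/
def firstCoord {d : ℕ} (x : V d) : ℤ := if h : 0 < d then x ⟨0, h⟩ else 0

/-- The half-space `ℍ = ℤ_{≥0} × ℤ^{d-1}`. -/
def halfspace (d : ℕ) : Set (V d) := {x | 0 ≤ firstCoord x}

/-- The shifted half-space `ℍ_m = -m e₁ + ℍ = {x : x₁ ≥ -m}`. -/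
def Hset (d : ℕ) (m : ℤ) : Set (V d) := {x | -m ≤ firstCoord x}

/-- The boundary `∂S`: vertices of `S` with a neighbour outside `S`. -/
def bdry {d : ℕ} (S : Set (V d)) : Set (V d) := {y | y ∈ S ∧ ∃ z, z ∉ S ∧ Adj y z}

/-- Condition `(ℓ¹_β)`. -/
def ellOne (d : ℕ) (lam β : ℝ) : Prop :=
  ∀ n : ℕ, phi d lam β (Hset d n) < ENNReal.ofReal (1 + 1 / (2 * d))

/-- Condition `(ℓ∞_β)`. -/
def ellInf (d : ℕ) (C lam β : ℝ) : Prop :=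
  ∀ n : ℕ, ∀ x ∈ bdry (Hset d n),
    G lam β (Hset d n) 0 x < ENNReal.ofReal (C / ((max 1 n : ℕ) : ℝ) ^ (d - 1))

/-- `β*(C,λ)`. -/
noncomputable def betaStar (d : ℕ) (C lam : ℝ) : ℝ :=
  sSup {β : ℝ | β ∈ Set.Icc 0 (betaC d lam) ∧ ellOne d lam β ∧ ellInf d C lam β}

/-- `E_β^{S,Λ}(u)`. -/
noncomputable def Efun (d : ℕ) (lam β : ℝ) (S Λ : Set (V d)) (u : V d) : ℝ≥0∞ :=
  ∑' p : {p : V d × V d // p.1 ∈ S ∧ p.2 ∈ Λ \ S ∧ Adj p.1 p.2},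
    G lam β S 0 u * G lam β S u p.1.1 * ENNReal.ofReal β * G lam β Λ p.1.2 u

/-- The error amplitude `E_β^{S,Λ} = Σ_{u ∈ S} E_β^{S,Λ}(u)`. -/
noncomputable def Eamp (d : ℕ) (lam β : ℝ) (S Λ : Set (V d)) : ℝ≥0∞ :=
  ∑' u : S, Efun d lam β S Λ u

/-- The set of blocks `ℬ`. -/
def Blocks (d : ℕ) : Set (Set (V d)) :=
  {B | ∃ a b : V d, (∀ i, a i ≤ 0) ∧ (∀ i, 0 ≤ b i) ∧
    B = {x | ∀ i, a i ≤ x i ∧ x i ≤ b i}}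



/-! ### Auxiliary material for the Simon–Lieb inequality -/

section SimonLieb

variable {d : ℕ}

/-- The prefix of a path: vertices `0, …, k`. -/
def prefixP (γ : SAWPath d) (k : ℕ) (hk : k ≤ γ.len) : SAWPath d where
  len := k
  f := fun i => γ.f ⟨i.val, by omega⟩
  adj := fun i => γ.adj ⟨i.val, by omega⟩

/-- The suffix of a path: vertices `k, …, γ.len`. -/
def suffixP (γ : SAWPath d) (k : ℕ) (hk : k ≤ γ.len) : SAWPath d where
  len := γ.len - k
  f := fun i => γ.f ⟨k + i.val, by omega⟩
  adj := fun i => γ.adj ⟨k + i.val, by omega⟩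

/-- Evaluation of a path at a natural number (clamped); a non-dependent accessor. -/
def ev (δ : SAWPath d) (m : ℕ) : V d := δ.f ⟨min m δ.len, by omega⟩

lemma SAWPath.ext' {γ γ' : SAWPath d} (h : γ.len = γ'.len)
    (hf : ∀ m : ℕ, ev γ m = ev γ' m) : γ = γ' := by
  obtain ⟨n, f, a⟩ := γ
  obtain ⟨n', f', a'⟩ := γ'
  simp only at h
  subst h
  have hff : f = f' := by
    funext i
    have h1 := hf i.val
    unfold ev at h1
    simp only at h1
    have hi : i.val ≤ n := Fin.is_le i
    convert h1 using 2 <;> exact Fin.ext (by first | omega | (simp; omega))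
  subst hff
  rfl

lemma ev_prefixP (γ : SAWPath d) (k : ℕ) (hk : k ≤ γ.len) (m : ℕ) (hm : m ≤ k) :
    ev (prefixP γ k hk) m = γ.f ⟨m, by omega⟩ := by
  show γ.f ⟨min m k, by omega⟩ = γ.f ⟨m, by omega⟩
  simp only [Nat.min_eq_left hm]

lemma ev_suffixP (γ : SAWPath d) (k : ℕ) (hk : k ≤ γ.len) (m : ℕ) (hm : m ≤ γ.len - k) :
    ev (suffixP γ k hk) m = γ.f ⟨k + m, by omega⟩ := by
  show γ.f ⟨k + min m (γ.len - k), by omega⟩ = γ.f ⟨k + m, by omega⟩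
  simp only [Nat.min_eq_left (show m ≤ γ.len - k by omega)]


lemma prefixP_f (γ : SAWPath d) (k : ℕ) (hk : k ≤ γ.len) (i : Fin (k+1)) :
    (prefixP γ k hk).f i = γ.f ⟨i.val, by omega⟩ := rfl

lemma suffixP_f (γ : SAWPath d) (k : ℕ) (hk : k ≤ γ.len) (i : Fin (γ.len - k + 1)) :
    (suffixP γ k hk).f i = γ.f ⟨k + i.val, by omega⟩ := rfl

lemma weight_nonneg {lam : ℝ} (hlam1 : lam ≤ 1) (γ : SAWPath d) : 0 ≤ weight lam γ :=
  Finset.prod_nonneg fun s _ => Finset.prod_nonneg fun t _ => by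
    split <;> linarith

lemma prod_prefix_eq {n k : ℕ} (hk : k ≤ n) (g : Fin (n+1) → ℝ)
    (hg : ∀ s : Fin (n+1), k < s.val → g s = 1) :
    ∏ s : Fin (n+1), g s = ∏ s : Fin (k+1), g ⟨s.val, by omega⟩ := by
  set F : ℕ → ℝ := fun i => if h : i < n+1 then g ⟨i, h⟩ else 1 with hF
  have e1 : ∏ s : Fin (n+1), g s = ∏ i ∈ Finset.range (n+1), F i := by
    rw [← Fin.prod_univ_eq_prod_range F (n+1)]
    refine Finset.prod_congr rfl fun s _ => ?_
    rw [hF]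
    simp [s.isLt]
  have hr : Finset.range (n+1) = Finset.range ((k+1) + (n-k)) := by congr 1; omega
  have e2 : ∏ i ∈ Finset.range (n+1), F i
      = (∏ i ∈ Finset.range (k+1), F i) * ∏ i ∈ Finset.range (n-k), F ((k+1) + i) := by
    rw [hr, Finset.prod_range_add]
  have e3 : ∏ i ∈ Finset.range (n-k), F ((k+1) + i) = 1 := by
    refine Finset.prod_eq_one fun i hi => ?_
    rw [Finset.mem_range] at hi
    rw [hF]
    dsimp only
    rw [dif_pos (by omega : (k+1) + i < n+1)]
    exact hg _ (by simp; omega)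
  have e4 : ∏ i ∈ Finset.range (k+1), F i = ∏ s : Fin (k+1), g ⟨s.val, by omega⟩ := by
    rw [← Fin.prod_univ_eq_prod_range F (k+1)]
    refine Finset.prod_congr rfl fun s _ => ?_
    rw [hF]
    dsimp only
    rw [dif_pos (by omega : (s.val : ℕ) < n+1)]
  rw [e1, e2, e3, mul_one, e4]

lemma prod_suffix_eq {n k : ℕ} (hk : k ≤ n) (g : Fin (n+1) → ℝ)
    (hg : ∀ s : Fin (n+1), s.val < k → g s = 1) :
    ∏ s : Fin (n+1), g s = ∏ s : Fin (n-k+1), g ⟨k + s.val, by omega⟩ := by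
  set F : ℕ → ℝ := fun i => if h : i < n+1 then g ⟨i, h⟩ else 1 with hF
  have e1 : ∏ s : Fin (n+1), g s = ∏ i ∈ Finset.range (n+1), F i := by
    rw [← Fin.prod_univ_eq_prod_range F (n+1)]
    refine Finset.prod_congr rfl fun s _ => ?_
    rw [hF]
    simp [s.isLt]
  have hr : Finset.range (n+1) = Finset.range (k + (n-k+1)) := by congr 1; omega
  have e2 : ∏ i ∈ Finset.range (n+1), F i
      = (∏ i ∈ Finset.range k, F i) * ∏ i ∈ Finset.range (n-k+1), F (k + i) := by
    rw [hr, Finset.prod_range_add]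
  have e3 : ∏ i ∈ Finset.range k, F i = 1 := by
    refine Finset.prod_eq_one fun i hi => ?_
    rw [Finset.mem_range] at hi
    rw [hF]
    dsimp only
    rw [dif_pos (by omega : i < n+1)]
    exact hg _ (by simp; omega)
  have e4 : ∏ i ∈ Finset.range (n-k+1), F (k + i) = ∏ s : Fin (n-k+1), g ⟨k + s.val, by omega⟩ := by
    rw [← Fin.prod_univ_eq_prod_range (fun i => F (k + i)) (n-k+1)]
    refine Finset.prod_congr rfl fun s _ => ?_
    rw [hF]
    dsimp only
    rw [dif_pos (by omega : k + (s.val : ℕ) < n+1)]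
  rw [e1, e2, e3, one_mul, e4]

lemma weight_split {lam : ℝ} (hlam0 : 0 ≤ lam) (hlam1 : lam ≤ 1) (γ : SAWPath d)
    (j : ℕ) (hj : j < γ.len) :
    weight lam γ ≤
      weight lam (prefixP γ j (by omega)) * weight lam (suffixP γ (j+1) (by omega)) := by
  set n := γ.len with hn
  set w : Fin (n+1) → Fin (n+1) → ℝ :=
    fun s t => if s < t ∧ γ.f s = γ.f t then 1 - lam else 1 with hw
  set a : Fin (n+1) → Fin (n+1) → ℝ :=
    fun s t => if s.val ≤ j ∧ t.val ≤ j then w s t else 1 with ha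
  set b : Fin (n+1) → Fin (n+1) → ℝ :=
    fun s t => if j+1 ≤ s.val ∧ j+1 ≤ t.val then w s t else 1 with hb
  have hw0 : ∀ s t, 0 ≤ w s t := by
    intro s t; rw [hw]; dsimp only; split <;> linarith
  have hw1 : ∀ s t, w s t ≤ 1 := by
    intro s t; rw [hw]; dsimp only; split <;> linarith
  have ha0 : ∀ s t, 0 ≤ a s t := by
    intro s t; rw [ha]; dsimp only; split
    · exact hw0 s t
    · linarith
  have hb0 : ∀ s t, 0 ≤ b s t := by
    intro s t; rw [hb]; dsimp only; split
    · exact hw0 s t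
    · linarith
  have hab : ∀ s t, w s t ≤ a s t * b s t := by
    intro s t
    rw [ha, hb]; dsimp only
    split_ifs with h1 h2 h2
    · exfalso; omega
    · rw [mul_one]
    · rw [one_mul]
    · rw [one_mul]; exact hw1 s t
  have step1 : weight lam γ = ∏ s, ∏ t, w s t := rfl
  have step2 : (∏ s, ∏ t, w s t) ≤ ∏ s, ∏ t, (a s t * b s t) := by
    refine Finset.prod_le_prod (fun s _ => Finset.prod_nonneg fun t _ => hw0 s t)
      (fun s _ => Finset.prod_le_prod (fun t _ => hw0 s t) (fun t _ => hab s t))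
  have step3 : (∏ s, ∏ t, (a s t * b s t)) = (∏ s, ∏ t, a s t) * (∏ s, ∏ t, b s t) := by
    simp only [Finset.prod_mul_distrib]
  have stepA : (∏ s, ∏ t, a s t) = weight lam (prefixP γ j (by omega)) := by
    rw [prod_prefix_eq (by omega : j ≤ n) (fun s => ∏ t, a s t)
      (fun s hs => Finset.prod_eq_one fun t _ => by
        rw [ha]; dsimp only; rw [if_neg]; omega)]
    unfold weight
    refine Finset.prod_congr rfl fun s _ => ?_
    rw [prod_prefix_eq (by omega : j ≤ n) (fun t => a ⟨s.val, by omega⟩ t)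
      (fun t ht => by rw [ha]; dsimp only; rw [if_neg]; simp; omega)]
    refine Finset.prod_congr rfl fun t _ => ?_
    rw [ha]; dsimp only
    rw [if_pos ⟨Fin.is_le s, Fin.is_le t⟩]
    rw [hw]; dsimp only
    rw [prefixP_f, prefixP_f]
    refine if_congr (and_congr ?_ Iff.rfl) rfl rfl
    exact Iff.rfl
  have stepB : (∏ s, ∏ t, b s t) = weight lam (suffixP γ (j+1) (by omega)) := by
    rw [prod_suffix_eq (by omega : j+1 ≤ n) (fun s => ∏ t, b s t)
      (fun s hs => Finset.prod_eq_one fun t _ => by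
        rw [hb]; dsimp only; rw [if_neg]; omega)]
    unfold weight
    refine Finset.prod_congr rfl fun s _ => ?_
    rw [prod_suffix_eq (by omega : j+1 ≤ n) (fun t => b ⟨j+1+s.val, by omega⟩ t)
      (fun t ht => by rw [hb]; dsimp only; rw [if_neg]; simp; omega)]
    refine Finset.prod_congr rfl fun t _ => ?_
    rw [hb]; dsimp only
    rw [if_pos ⟨Nat.le_add_right _ _, Nat.le_add_right _ _⟩]
    rw [hw]; dsimp only
    rw [suffixP_f, suffixP_f]
    refine if_congr (and_congr ?_ Iff.rfl) rfl rfl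
    show j + 1 + s.val < j + 1 + t.val ↔ s.val < t.val
    simp
  rw [step1, ← stepA, ← stepB]
  exact step2.trans (le_of_eq step3)


/-- A path is determined by its prefix/suffix at a split point. -/
lemma split_inj {γ γ' : SAWPath d} {k k' : ℕ}
    (hk1 : 1 ≤ k) (hk : k ≤ γ.len) (hk1' : 1 ≤ k') (hk' : k' ≤ γ'.len)
    (hpre : prefixP γ (k - 1) (by omega) = prefixP γ' (k' - 1) (by omega))
    (hsuf : suffixP γ k hk = suffixP γ' k' hk') : γ = γ' := by
  have hkk : k = k' := by
    have := congrArg SAWPath.len hpre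
    simp only [prefixP] at this
    omega
  subst hkk
  have hnn : γ.len = γ'.len := by
    have := congrArg SAWPath.len hsuf
    simp only [suffixP] at this
    omega
  refine SAWPath.ext' hnn (fun m => ?_)
  by_cases hm : m ≤ k - 1
  · have h1 := congrArg (fun δ => ev δ m) hpre
    rw [ev_prefixP γ _ (by omega) m hm, ev_prefixP γ' _ (by omega) m hm] at h1
    unfold ev
    convert h1 using 2 <;> exact Fin.ext (by first | omega | (simp; omega))
  · by_cases hmn : m ≤ γ.len
    · have h2 := congrArg (fun δ => ev δ (m - k)) hsuf
      rw [ev_suffixP γ k hk (m - k) (by omega),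
          ev_suffixP γ' k hk' (m - k) (by omega)] at h2
      unfold ev
      convert h2 using 2 <;> exact Fin.ext (by first | omega | (simp; omega))
    · have h2 := congrArg (fun δ => ev δ (γ.len - k)) hsuf
      rw [ev_suffixP γ k hk (γ.len - k) le_rfl,
          ev_suffixP γ' k hk' (γ.len - k) (by omega)] at h2
      unfold ev
      convert h2 using 2 <;> exact Fin.ext (by first | omega | (simp; omega))


lemma prefixP_len (γ : SAWPath d) (k : ℕ) (hk : k ≤ γ.len) : (prefixP γ k hk).len = k := rfl

lemma suffixP_len (γ : SAWPath d) (k : ℕ) (hk : k ≤ γ.len) :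
    (suffixP γ k hk).len = γ.len - k := rfl

/-- `j`-indexed version of `split_inj`. -/
lemma split_inj' {γ γ' : SAWPath d} {j j' : ℕ} (hj : j < γ.len) (hj' : j' < γ'.len)
    (hpre : prefixP γ j (by omega) = prefixP γ' j' (by omega))
    (hsuf : suffixP γ (j+1) (by omega) = suffixP γ' (j'+1) (by omega)) : γ = γ' :=
  split_inj (k := j+1) (k' := j'+1) (by omega) (by omega) (by omega) (by omega) hpre hsuf

/-- The one-step weight summand. -/
noncomputable def tfun (lam β : ℝ) (γ : SAWPath d) : ℝ≥0∞ :=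
  ENNReal.ofReal (β ^ γ.len * weight lam γ)

lemma G_eq (lam β : ℝ) (Λ : Set (V d)) (x y : V d) :
    G lam β Λ x y = ∑' γ : PathsIn Λ x y, tfun lam β γ.1 := rfl

lemma tfun_split {lam β : ℝ} (hlam0 : 0 ≤ lam) (hlam1 : lam ≤ 1) (hβ : 0 ≤ β)
    (γ : SAWPath d) (j : ℕ) (hj : j < γ.len) :
    tfun lam β γ ≤ tfun lam β (prefixP γ j (by omega)) * ENNReal.ofReal β *
      tfun lam β (suffixP γ (j+1) (by omega)) := by
  unfold tfun
  rw [prefixP_len, suffixP_len]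
  rw [← ENNReal.ofReal_mul (mul_nonneg (pow_nonneg hβ _) (weight_nonneg hlam1 _))]
  rw [← ENNReal.ofReal_mul (mul_nonneg
    (mul_nonneg (pow_nonneg hβ _) (weight_nonneg hlam1 _)) hβ)]
  apply ENNReal.ofReal_le_ofReal
  have hw := weight_split hlam0 hlam1 γ j hj
  have hpow : β ^ j * β * β ^ (γ.len - (j+1)) = β ^ γ.len := by
    rw [← pow_succ, ← pow_add]
    congr 1
    omega
  calc β ^ γ.len * weight lam γ
      ≤ β ^ γ.len * (weight lam (prefixP γ j (by omega)) *
          weight lam (suffixP γ (j+1) (by omega))) :=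
        mul_le_mul_of_nonneg_left hw (pow_nonneg hβ _)
    _ = β ^ j * weight lam (prefixP γ j (by omega)) * β *
          (β ^ (γ.len - (j+1)) * weight lam (suffixP γ (j+1) (by omega))) := by
        rw [← hpow]; ring

/-- Paths in `Λ` from `0` to `x` that exit `S`. -/
def BadSet (S Λ : Set (V d)) (x : V d) : Set (SAWPath d) :=
  {γ | γ ∈ PathsIn Λ 0 x ∧ ∃ m, ∃ hm : m < γ.len + 1, γ.f ⟨m, hm⟩ ∉ S}

lemma exit_exists {S Λ : Set (V d)} {x : V d} (h0S : (0 : V d) ∈ S)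
    (γ : SAWPath d) (hγ : γ ∈ BadSet S Λ x) :
    ∃ j : ℕ, ∃ hj : j + 1 < γ.len + 1,
      γ.f ⟨j+1, hj⟩ ∉ S ∧ ∀ m (hm : m < γ.len + 1), m ≤ j → γ.f ⟨m, hm⟩ ∈ S := by
  classical
  obtain ⟨hpath, hex⟩ := hγ
  have hfind := Nat.find_spec hex
  obtain ⟨hklt, hkout⟩ := hfind
  have hk1 : 1 ≤ Nat.find hex := by
    by_contra h
    have hk0 : Nat.find hex = 0 := by omega
    have e : (⟨Nat.find hex, hklt⟩ : Fin (γ.len+1)) = 0 := by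
      apply Fin.ext
      rw [Fin.val_zero]; exact hk0
    rw [e, hpath.1] at hkout
    exact hkout h0S
  refine ⟨Nat.find hex - 1, by omega, ?_, ?_⟩
  · have e : (⟨Nat.find hex - 1 + 1, by omega⟩ : Fin (γ.len+1)) = ⟨Nat.find hex, hklt⟩ := by
      apply Fin.ext
      show Nat.find hex - 1 + 1 = Nat.find hex
      omega
    rw [e]
    exact hkout
  · intro m hm hmk
    by_contra hns
    have := Nat.find_min' hex ⟨hm, hns⟩
    omega

/-- The first exit time (minus one) of a bad path. -/
noncomputable def exitJ {S Λ : Set (V d)} {x : V d} (h0S : (0 : V d) ∈ S)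
    (γ : SAWPath d) (hγ : γ ∈ BadSet S Λ x) : ℕ :=
  Classical.choose (exit_exists h0S γ hγ)

lemma exitJ_lt {S Λ : Set (V d)} {x : V d} (h0S : (0 : V d) ∈ S)
    (γ : SAWPath d) (hγ : γ ∈ BadSet S Λ x) : exitJ h0S γ hγ + 1 < γ.len + 1 := by
  obtain ⟨h, -⟩ := Classical.choose_spec (exit_exists h0S γ hγ)
  exact h

lemma exitJ_out {S Λ : Set (V d)} {x : V d} (h0S : (0 : V d) ∈ S)
    (γ : SAWPath d) (hγ : γ ∈ BadSet S Λ x) (h : exitJ h0S γ hγ + 1 < γ.len + 1) :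
    γ.f ⟨exitJ h0S γ hγ + 1, h⟩ ∉ S := by
  obtain ⟨hj, hout, -⟩ := Classical.choose_spec (exit_exists h0S γ hγ)
  exact hout

lemma exitJ_mem {S Λ : Set (V d)} {x : V d} (h0S : (0 : V d) ∈ S)
    (γ : SAWPath d) (hγ : γ ∈ BadSet S Λ x) (m : ℕ) (hm : m < γ.len + 1)
    (hmk : m ≤ exitJ h0S γ hγ) : γ.f ⟨m, hm⟩ ∈ S := by
  obtain ⟨hj, -, hmem⟩ := Classical.choose_spec (exit_exists h0S γ hγ)
  exact hmem m hm hmk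

/-- Splitting a bad path at its first exit time. -/
noncomputable def splitMap {S Λ : Set (V d)} {x : V d} (h0S : (0 : V d) ∈ S) (hSΛ : S ⊆ Λ)
    (γ : BadSet S Λ x) :
    (p : {p : V d × V d // p.1 ∈ S ∧ p.2 ∈ Λ \ S ∧ Adj p.1 p.2}) ×
      (↥(PathsIn S 0 p.1.1) × ↥(PathsIn Λ p.1.2 x)) :=
  ⟨⟨(γ.1.f ⟨exitJ h0S γ.1 γ.2, by have := exitJ_lt h0S γ.1 γ.2; omega⟩,
     γ.1.f ⟨exitJ h0S γ.1 γ.2 + 1, exitJ_lt h0S γ.1 γ.2⟩),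
    by
      refine ⟨exitJ_mem h0S γ.1 γ.2 _ _ le_rfl, ⟨γ.2.1.2.2 _, exitJ_out h0S γ.1 γ.2 _⟩, ?_⟩
      exact γ.1.adj ⟨exitJ h0S γ.1 γ.2, by have := exitJ_lt h0S γ.1 γ.2; omega⟩⟩,
   ⟨⟨prefixP γ.1 (exitJ h0S γ.1 γ.2) (by have := exitJ_lt h0S γ.1 γ.2; omega),
     by
       refine ⟨?_, ?_, ?_⟩
       · erw [prefixP_f]
         have h0 := γ.2.1.1
         convert h0 using 2
         all_goals (apply Fin.ext; simp)
       · dsimp only [prefixP]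
         apply congrArg γ.1.f
         apply Fin.ext
         simp [prefixP_len]
       · intro i
         erw [prefixP_f]
         exact exitJ_mem h0S γ.1 γ.2 i.val _ (Fin.is_le i)⟩,
    ⟨suffixP γ.1 (exitJ h0S γ.1 γ.2 + 1) (by have := exitJ_lt h0S γ.1 γ.2; omega),
     by
       refine ⟨?_, ?_, ?_⟩
       · dsimp only [suffixP]
         apply congrArg γ.1.f
         apply Fin.ext
         simp
       · erw [suffixP_f]
         have hlast := γ.2.1.2.1
         convert hlast using 2
         all_goals
           apply Fin.ext
           have := exitJ_lt h0S γ.1 γ.2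
           simp [suffixP_len]
           omega
       · intro i
         erw [suffixP_f]
         exact γ.2.1.2.2 _⟩⟩⟩


lemma bad_sum_le {lam β : ℝ} (hlam0 : 0 ≤ lam) (hlam1 : lam ≤ 1) (hβ : 0 ≤ β)
    {S Λ : Set (V d)} {x : V d} (h0S : (0 : V d) ∈ S) (hSΛ : S ⊆ Λ) :
    ∑' γ : BadSet S Λ x, tfun lam β γ.1 ≤
      ∑' p : {p : V d × V d // p.1 ∈ S ∧ p.2 ∈ Λ \ S ∧ Adj p.1 p.2},
        G lam β S 0 p.1.1 * ENNReal.ofReal β * G lam β Λ p.1.2 x := by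
  classical
  set g : ((p : {p : V d × V d // p.1 ∈ S ∧ p.2 ∈ Λ \ S ∧ Adj p.1 p.2}) ×
      (↥(PathsIn S 0 p.1.1) × ↥(PathsIn Λ p.1.2 x))) → ℝ≥0∞ :=
    fun q => tfun lam β q.2.1.1 * ENNReal.ofReal β * tfun lam β q.2.2.1 with hg
  have h1 : ∀ γ : BadSet S Λ x, tfun lam β γ.1 ≤ g (splitMap h0S hSΛ γ) := by
    intro γ
    exact tfun_split hlam0 hlam1 hβ γ.1 (exitJ h0S γ.1 γ.2)
      (by have := exitJ_lt h0S γ.1 γ.2; omega)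
  have h2 : Function.Injective (splitMap (Λ := Λ) (x := x) h0S hSΛ) := by
    intro γ γ' h
    have hpre := congrArg (fun q : ((p : {p : V d × V d // p.1 ∈ S ∧ p.2 ∈ Λ \ S ∧ Adj p.1 p.2}) ×
      (↥(PathsIn S 0 p.1.1) × ↥(PathsIn Λ p.1.2 x))) => q.2.1.1) h
    have hsuf := congrArg (fun q : ((p : {p : V d × V d // p.1 ∈ S ∧ p.2 ∈ Λ \ S ∧ Adj p.1 p.2}) ×
      (↥(PathsIn S 0 p.1.1) × ↥(PathsIn Λ p.1.2 x))) => q.2.2.1) h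
    simp only [splitMap] at hpre hsuf
    exact Subtype.ext (split_inj'
      (by have := exitJ_lt h0S γ.1 γ.2; omega)
      (by have := exitJ_lt h0S γ'.1 γ'.2; omega) hpre hsuf)
  calc ∑' γ : BadSet S Λ x, tfun lam β γ.1
      ≤ ∑' γ : BadSet S Λ x, g (splitMap h0S hSΛ γ) := ENNReal.tsum_le_tsum h1
    _ ≤ ∑' q, g q := ENNReal.tsum_comp_le_tsum_of_injective h2 g
    _ = ∑' p : {p : V d × V d // p.1 ∈ S ∧ p.2 ∈ Λ \ S ∧ Adj p.1 p.2},
        G lam β S 0 p.1.1 * ENNReal.ofReal β * G lam β Λ p.1.2 x := by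
      rw [hg]
      rw [ENNReal.tsum_sigma
        (fun (a : {p : V d × V d // p.1 ∈ S ∧ p.2 ∈ Λ \ S ∧ Adj p.1 p.2})
          (b : ↥(PathsIn S 0 a.1.1) × ↥(PathsIn Λ a.1.2 x)) =>
            tfun lam β b.1.1 * ENNReal.ofReal β * tfun lam β b.2.1)]
      refine tsum_congr fun p => ?_
      rw [ENNReal.tsum_prod
        (f := fun (u : ↥(PathsIn S 0 p.1.1)) (v : ↥(PathsIn Λ p.1.2 x)) =>
          tfun lam β u.1 * ENNReal.ofReal β * tfun lam β v.1)]
      rw [G_eq, G_eq]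
      simp only [ENNReal.tsum_mul_left, ENNReal.tsum_mul_right]


end SimonLieb


/-- **Simon–Lieb upper bound.** For `d ≥ 2`, `0 < β < β_c`, `0 ∈ S ⊆ Λ ⊆ ℤ^d` and `x ∈ Λ`:
`G_β^Λ(0,x) ≤ G_β^S(0,x) + Σ_{y ∈ S, z ∈ Λ∖S, y∼z} G_β^S(0,y) β G_β^Λ(z,x)`. -/
theorem statement4 (d : ℕ) (hd : 2 ≤ d) (lam : ℝ) (hlam0 : 0 ≤ lam) (hlam1 : lam ≤ 1)
    (β : ℝ) (hβ0 : 0 < β) (hβc : β < betaC d lam)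
    (S Λ : Set (V d)) (h0S : (0 : V d) ∈ S) (hSΛ : S ⊆ Λ) (x : V d) (hx : x ∈ Λ) :
    G lam β Λ 0 x ≤
      G lam β S 0 x +
        ∑' p : {p : V d × V d // p.1 ∈ S ∧ p.2 ∈ Λ \ S ∧ Adj p.1 p.2},
          G lam β S 0 p.1.1 * ENNReal.ofReal β * G lam β Λ p.1.2 x := by
  have key : G lam β Λ 0 x ≤ G lam β S 0 x + ∑' γ : BadSet S Λ x, tfun lam β γ.1 := by
    rw [G_eq lam β Λ 0 x, G_eq lam β S 0 x, tsum_subtype, tsum_subtype,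
      tsum_subtype (BadSet S Λ x) (tfun lam β), ← ENNReal.tsum_add]
    refine ENNReal.tsum_le_tsum fun γ => ?_
    by_cases hγ : γ ∈ PathsIn Λ 0 x
    · rw [Set.indicator_of_mem hγ]
      by_cases hall : ∀ i, γ.f i ∈ S
      · have hmem : γ ∈ PathsIn S 0 x := ⟨hγ.1, hγ.2.1, hall⟩
        rw [Set.indicator_of_mem hmem]
        exact le_self_add
      · push_neg at hall
        obtain ⟨i, hi⟩ := hall
        have hmem : γ ∈ BadSet S Λ x := ⟨hγ, i.val, i.isLt, by simpa using hi⟩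
        rw [Set.indicator_of_mem hmem]
        exact le_add_self
    · rw [Set.indicator_of_notMem hγ]
      exact zero_le
  exact key.trans (add_le_add (le_refl _) (bad_sum_le hlam0 hlam1 hβ0.le h0S hSΛ))
end WSAW
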